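/- arXiv:2305.18440 — 2 statements merged into one kernel-verified Lean document; each statement's English description precedes it below -/
import Mathlib

section
/- Let f : ℝ^M → ℝ be continuously differentiable and let P be a probability measure on ℝ^M such that f is P-integrable and x⁰ ↦ IG_i(x^t | x⁰) is P-integrable for every i. Then the expected integrated gradients satisfy the sum rule: Σ_{i=1}^M EIG_i(x^t) = f(x^t) − ∫ f dP. -/
open MeasureTheory Finset

/-- Partial derivative of `f : ℝ^M → ℝ` with respect to the `i`-th coordinate. -/
noncomputable def partialDeriv' {M : ℕ} (f : (Fin M → ℝ) → ℝ) (i : Fin M) (x : Fin M → ℝ) : ℝ :=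
  fderiv ℝ f x (Pi.single i 1)

/-- Integrated gradient of `f` at test point `xt` with baseline `x0`, coordinate `i`. -/
noncomputable def IG {M : ℕ} (f : (Fin M → ℝ) → ℝ) (xt x0 : Fin M → ℝ) (i : Fin M) : ℝ :=
  (xt i - x0 i) * ∫ α in (0:ℝ)..1, partialDeriv' f i (x0 + α • (xt - x0))

/-- Expected integrated gradient of `f` with respect to a measure `P` on the baselines. -/
noncomputable def EIG {M : ℕ} (f : (Fin M → ℝ) → ℝ) (P : Measure (Fin M → ℝ))
    (xt : Fin M → ℝ) (i : Fin M) : ℝ :=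
  ∫ x0, IG f xt x0 i ∂P

lemma ig_sum {M : ℕ} (f : (Fin M → ℝ) → ℝ) (hf : ContDiff ℝ 1 f)
    (xt x0 : Fin M → ℝ) :
    ∑ i : Fin M, IG f xt x0 i = f xt - f x0 := by
  set γ : ℝ → (Fin M → ℝ) := fun α => x0 + α • (xt - x0) with hγ
  have hγc : Continuous γ := by continuity
  have hγd : ∀ t : ℝ, HasDerivAt γ (xt - x0) t := by
    intro t
    simpa [hγ] using ((hasDerivAt_id t).smul_const (xt - x0)).const_add x0
  have hcont : ∀ i : Fin M, Continuous (fun α : ℝ => partialDeriv' f i (γ α)) := by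
    intro i
    exact (((hf.continuous_fderiv one_ne_zero).comp hγc).clm_apply continuous_const)
  -- each summand integrand is interval integrable
  have hii : ∀ i : Fin M, IntervalIntegrable
      (fun α : ℝ => (xt i - x0 i) * partialDeriv' f i (γ α)) MeasureTheory.volume 0 1 := by
    intro i
    exact (continuous_const.mul (hcont i)).intervalIntegrable 0 1
  have hswap : ∑ i : Fin M, IG f xt x0 i
      = ∫ α in (0:ℝ)..1, ∑ i : Fin M, (xt i - x0 i) * partialDeriv' f i (γ α) := by
    rw [intervalIntegral.integral_finset_sum (fun i _ => hii i)]
    refine Finset.sum_congr rfl fun i _ => ?_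
    rw [intervalIntegral.integral_const_mul]
    rfl
  rw [hswap]
  have hF : ∀ t : ℝ, HasDerivAt (fun α => f (γ α))
      (∑ i : Fin M, (xt i - x0 i) * partialDeriv' f i (γ t)) t := by
    intro t
    have hfd : HasFDerivAt f (fderiv ℝ f (γ t)) (γ t) :=
      (hf.differentiable one_ne_zero (γ t)).hasFDerivAt
    have h := hfd.comp_hasDerivAt t (hγd t)
    have hv : fderiv ℝ f (γ t) (xt - x0)
        = ∑ i : Fin M, (xt i - x0 i) * partialDeriv' f i (γ t) := by
      have : (xt - x0) = ∑ i : Fin M, (xt i - x0 i) • (Pi.single i 1 : Fin M → ℝ) := by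
        ext j
        simp [Finset.sum_apply, Pi.single_apply]
      rw [this, map_sum]
      refine Finset.sum_congr rfl fun i _ => ?_
      simp [partialDeriv', smul_eq_mul]
    rw [← hv]
    exact h
  have hcsum : Continuous (fun t : ℝ => ∑ i : Fin M, (xt i - x0 i) * partialDeriv' f i (γ t)) :=
    continuous_finset_sum _ (fun i _ => continuous_const.mul (hcont i))
  have := intervalIntegral.integral_eq_sub_of_hasDerivAt
    (f := fun α => f (γ α)) (f' := fun t => ∑ i : Fin M, (xt i - x0 i) * partialDeriv' f i (γ t))
    (fun t _ => hF t) (hcsum.intervalIntegrable 0 1)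
  rw [this]
  simp [hγ]

/-- sum rule for expected integrated gradients:
`Σ_i EIG_i(x^t) = f(x^t) − ∫ f dP`. -/
theorem eig_sum_rule {M : ℕ} (f : (Fin M → ℝ) → ℝ) (hf : ContDiff ℝ 1 f)
    (P : Measure (Fin M → ℝ)) [IsProbabilityMeasure P]
    (hfint : Integrable f P) (xt : Fin M → ℝ)
    (hint : ∀ i : Fin M, Integrable (fun x0 => IG f xt x0 i) P) :
    ∑ i : Fin M, EIG f P xt i = f xt - ∫ x, f x ∂P := by
  have h1 : ∑ i : Fin M, EIG f P xt i = ∫ x0, ∑ i : Fin M, IG f xt x0 i ∂P := by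
    rw [integral_finset_sum _ (fun i _ => hint i)]
    rfl
  rw [h1]
  have h2 : ∫ x0, ∑ i : Fin M, IG f xt x0 i ∂P = ∫ x0, (f xt - f x0) ∂P := by
    exact integral_congr_ae (Filter.Eventually.of_forall fun x0 => ig_sum f hf xt x0)
  rw [h2, integral_sub (integrable_const _) hfint, integral_const]
  simp
end

section
/- Let f(x) = c + bᵀx + ½ xᵀA x be a quadratic polynomial on ℝ^M with A symmetric, and let P be a probability measure on ℝ^M with finite second moments. Writing Δ = x^t − x⁰ for x⁰ distributed according to P and ⟨·⟩ for expectation under P, the expected integrated gradient admits the exact closed form EIG_i(x^t) = ⟨Δ_i⟩ · ∂f(x^t)/∂x_i − ½ Σ_{j=1}^M ⟨Δ_i Δ_j⟩ · A_{ij} for every i, where ∂f(x^t)/∂x_i = b_i + (A x^t)_i and A_{ij} = ∂²f/∂x_i∂x_j. -/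
open MeasureTheory Finset

/-- The quadratic polynomial `f(x) = c + bᵀx + ½ xᵀA x`. -/
noncomputable def quadf {M : ℕ} (c : ℝ) (b : Fin M → ℝ) (A : Matrix (Fin M) (Fin M) ℝ)
    (x : Fin M → ℝ) : ℝ :=
  c + ∑ i : Fin M, b i * x i + (1 / 2) * ∑ i : Fin M, ∑ j : Fin M, x i * A i j * x j

lemma quadf_hasFDerivAt {M : ℕ} (c : ℝ) (b : Fin M → ℝ) (A : Matrix (Fin M) (Fin M) ℝ)
    (x : Fin M → ℝ) :
    HasFDerivAt (quadf c b A)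
      ((∑ j : Fin M, b j • (ContinuousLinearMap.proj j : (Fin M → ℝ) →L[ℝ] ℝ))
        + (1/2 : ℝ) • ∑ j : Fin M, ∑ k : Fin M,
            ((x j * A j k) • (ContinuousLinearMap.proj k : (Fin M → ℝ) →L[ℝ] ℝ)
              + x k • (A j k • (ContinuousLinearMap.proj j : (Fin M → ℝ) →L[ℝ] ℝ)))) x := by
  have hproj : ∀ j : Fin M, HasFDerivAt (fun y : Fin M → ℝ => y j)
      (ContinuousLinearMap.proj j : (Fin M → ℝ) →L[ℝ] ℝ) x :=
    fun j => (ContinuousLinearMap.proj j : (Fin M → ℝ) →L[ℝ] ℝ).hasFDerivAt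
  have h1 : HasFDerivAt (fun y : Fin M → ℝ => ∑ j : Fin M, b j * y j)
      (∑ j : Fin M, b j • (ContinuousLinearMap.proj j : (Fin M → ℝ) →L[ℝ] ℝ)) x :=
    HasFDerivAt.fun_sum (fun j _ => (hproj j).const_mul (b j))
  have h2 : HasFDerivAt (fun y : Fin M → ℝ => ∑ j : Fin M, ∑ k : Fin M, y j * A j k * y k)
      (∑ j : Fin M, ∑ k : Fin M,
            ((x j * A j k) • (ContinuousLinearMap.proj k : (Fin M → ℝ) →L[ℝ] ℝ)
              + x k • (A j k • (ContinuousLinearMap.proj j : (Fin M → ℝ) →L[ℝ] ℝ)))) x :=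
    HasFDerivAt.fun_sum (fun j _ => HasFDerivAt.fun_sum (fun k _ =>
      ((hproj j).mul_const (A j k)).mul (hproj k)))
  have := ((hasFDerivAt_const c x).add h1).add (h2.const_mul (1/2 : ℝ))
  have e : quadf c b A = ((fun _ => c) + fun y : Fin M → ℝ => ∑ j : Fin M, b j * y j)
      + fun y : Fin M → ℝ => (1/2 : ℝ) * ∑ j : Fin M, ∑ k : Fin M, y j * A j k * y k := rfl
  rw [e]
  exact this.congr_fderiv (by simp)

lemma partialDeriv_quadf {M : ℕ} (c : ℝ) (b : Fin M → ℝ) (A : Matrix (Fin M) (Fin M) ℝ)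
    (hA : A.IsSymm) (x : Fin M → ℝ) (i : Fin M) :
    partialDeriv' (quadf c b A) i x = b i + ∑ j : Fin M, A i j * x j := by
  have h := (quadf_hasFDerivAt c b A x).fderiv
  rw [partialDeriv', h]
  simp only [ContinuousLinearMap.add_apply, ContinuousLinearMap.smul_apply,
    ContinuousLinearMap.coe_sum', Finset.sum_apply, ContinuousLinearMap.proj_apply,
    smul_eq_mul, Pi.single_apply]
  have e1 : ∀ j k : Fin M, A j k = A k j := fun j k => (Matrix.IsSymm.apply hA k j)
  simp only [mul_ite, mul_one, mul_zero, Finset.sum_ite_eq', Finset.mem_univ, if_true]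
  have key : ∀ x1 : Fin M, ∑ x2 : Fin M, ((if x2 = i then x x1 * A x1 x2 else 0)
      + if x1 = i then x x2 * A x1 x2 else 0)
      = x x1 * A x1 i + if x1 = i then ∑ x2 : Fin M, x x2 * A x1 x2 else 0 := by
    intro x1
    rw [Finset.sum_add_distrib]
    simp [Finset.sum_ite_eq', Finset.sum_ite_irrel]
  simp only [key]
  rw [Finset.sum_add_distrib]
  simp only [Finset.sum_ite_eq', Finset.mem_univ, if_true]
  rw [show ∑ j : Fin M, x j * A j i = ∑ j : Fin M, A i j * x j from
    Finset.sum_congr rfl fun j _ => by rw [e1 j i]; ring]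
  rw [show ∑ x2 : Fin M, x x2 * A i x2 = ∑ j : Fin M, A i j * x j from
    Finset.sum_congr rfl fun j _ => mul_comm _ _]
  ring

lemma ig_quadf {M : ℕ} (c : ℝ) (b : Fin M → ℝ) (A : Matrix (Fin M) (Fin M) ℝ)
    (hA : A.IsSymm) (xt x0 : Fin M → ℝ) (i : Fin M) :
    IG (quadf c b A) xt x0 i
      = (xt i - x0 i) * (b i + ∑ j : Fin M, A i j * xt j)
        - (1/2) * ∑ j : Fin M, ((xt i - x0 i) * (xt j - x0 j)) * A i j := by
  set C := b i + ∑ j : Fin M, A i j * x0 j with hC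
  set D := ∑ j : Fin M, A i j * (xt j - x0 j) with hD
  have hfun : ∀ α : ℝ, partialDeriv' (quadf c b A) i (x0 + α • (xt - x0)) = C + α * D := by
    intro α
    rw [partialDeriv_quadf c b A hA]
    have h1 : ∑ j : Fin M, A i j * ((x0 + α • (xt - x0)) j)
        = (∑ j : Fin M, A i j * x0 j) + α * ∑ j : Fin M, A i j * (xt j - x0 j) := by
      rw [Finset.mul_sum, ← Finset.sum_add_distrib]
      exact Finset.sum_congr rfl fun j _ => by
        simp only [Pi.add_apply, Pi.smul_apply, Pi.sub_apply, smul_eq_mul]; ring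
    rw [h1, hC, hD]; ring
  have hid : (∫ α in (0:ℝ)..1, α) = 1/2 := by
    rw [integral_id]; norm_num
  have hint : (∫ α in (0:ℝ)..1, partialDeriv' (quadf c b A) i (x0 + α • (xt - x0)))
      = C + D / 2 := by
    rw [intervalIntegral.integral_congr (g := fun α => C + α * D) (fun α _ => hfun α)]
    rw [intervalIntegral.integral_add (intervalIntegrable_const)
      (intervalIntegral.intervalIntegrable_id.mul_const D)]
    rw [intervalIntegral.integral_const, intervalIntegral.integral_mul_const, hid]
    norm_num
    ring
  have h2 : ∑ j : Fin M, ((xt i - x0 i) * (xt j - x0 j)) * A i j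
      = (xt i - x0 i) * ∑ j : Fin M, A i j * (xt j - x0 j) := by
    rw [Finset.mul_sum]
    exact Finset.sum_congr rfl fun j _ => by ring
  have h3 : ∑ j : Fin M, A i j * x0 j
      = (∑ j : Fin M, A i j * xt j) - ∑ j : Fin M, A i j * (xt j - x0 j) := by
    rw [← Finset.sum_sub_distrib]
    exact Finset.sum_congr rfl fun j _ => by ring
  rw [IG, hint, h2, hC, hD, h3]
  ring

/-- for a quadratic polynomial `f(x) = c + bᵀx + ½ xᵀA x` with `A` symmetric
and a probability measure `P` with finite second moments, writing `Δ = x^t − x⁰` for `x⁰ ~ P`,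
the expected integrated gradient has the exact closed form
`EIG_i(x^t) = ⟨Δ_i⟩·∂f(x^t)/∂x_i − ½ Σ_j ⟨Δ_i Δ_j⟩·A_{ij}` with
`∂f(x^t)/∂x_i = b_i + (A x^t)_i`. -/
theorem eig_quadratic_closed_form {M : ℕ} (c : ℝ) (b : Fin M → ℝ)
    (A : Matrix (Fin M) (Fin M) ℝ) (hA : A.IsSymm)
    (P : Measure (Fin M → ℝ)) [IsProbabilityMeasure P]
    (hmom1 : ∀ i : Fin M, Integrable (fun x : Fin M → ℝ => x i) P)
    (hmom2 : ∀ i j : Fin M, Integrable (fun x : Fin M → ℝ => x i * x j) P)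
    (xt : Fin M → ℝ) (i : Fin M) :
    EIG (quadf c b A) P xt i
      = (∫ x0, (xt i - x0 i) ∂P) * (b i + ∑ j : Fin M, A i j * xt j)
        - (1 / 2) * ∑ j : Fin M, (∫ x0, (xt i - x0 i) * (xt j - x0 j) ∂P) * A i j := by
  have hΔ : ∀ j : Fin M, Integrable (fun x0 : Fin M → ℝ => xt j - x0 j) P :=
    fun j => (integrable_const (xt j)).sub (hmom1 j)
  have hΔΔ : ∀ j : Fin M, Integrable (fun x0 : Fin M → ℝ => (xt i - x0 i) * (xt j - x0 j)) P := by
    intro j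
    have : (fun x0 : Fin M → ℝ => (xt i - x0 i) * (xt j - x0 j))
        = fun x0 : Fin M → ℝ => ((xt i * xt j - xt i * x0 j) - xt j * x0 i) + x0 i * x0 j := by
      funext x0; ring
    rw [this]
    exact (((integrable_const (xt i * xt j)).sub ((hmom1 j).const_mul (xt i))).sub
      ((hmom1 i).const_mul (xt j))).add (hmom2 i j)
  have h1 : Integrable (fun x0 : Fin M → ℝ =>
      (xt i - x0 i) * (b i + ∑ j : Fin M, A i j * xt j)) P :=
    (hΔ i).mul_const _
  have h2 : Integrable (fun x0 : Fin M → ℝ =>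
      (1/2 : ℝ) * ∑ j : Fin M, ((xt i - x0 i) * (xt j - x0 j)) * A i j) P :=
    (integrable_finset_sum _ fun j _ => (hΔΔ j).mul_const (A i j)).const_mul _
  rw [EIG]
  rw [show (fun x0 => IG (quadf c b A) xt x0 i)
      = fun x0 : Fin M → ℝ => (xt i - x0 i) * (b i + ∑ j : Fin M, A i j * xt j)
          - (1/2) * ∑ j : Fin M, ((xt i - x0 i) * (xt j - x0 j)) * A i j from
    funext fun x0 => ig_quadf c b A hA xt x0 i]
  rw [integral_sub h1 h2, integral_mul_const, integral_const_mul,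
    integral_finset_sum _ (fun j _ => (hΔΔ j).mul_const (A i j))]
  congr 2
  exact Finset.sum_congr rfl fun j _ => integral_mul_const _ _
end
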